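/- Let L be an element of BV̂ of height no more than k (with respect to the elements v_n), and let m ∈ ℕ. Then L·v_m has height no more than k+1 if m ≤ k−1, and L·v_m has height no more than m+2 if m ≥ k−1. -/

import Mathlib

namespace BrinStmt13

/-- The free-group generators for the infinite presentation of `BVhat`:
`Sum.inl i` is the generator `λ_i` and `Sum.inr i` is the generator `σ_i`. -/
def lamF (i : ℕ) : FreeGroup (ℕ ⊕ ℕ) := FreeGroup.of (Sum.inl i)
def sigF (i : ℕ) : FreeGroup (ℕ ⊕ ℕ) := FreeGroup.of (Sum.inr i)

/-- The relators of the infinite presentation of the group `BV̂`. -/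
def bvhatRels : Set (FreeGroup (ℕ ⊕ ℕ)) :=
  { r | (∃ m q : ℕ, m < q ∧ r = lamF q * lamF m * (lamF m * lamF (q+1))⁻¹) ∨
        (∃ m n : ℕ, (m + 2 ≤ n ∨ n + 2 ≤ m) ∧
            r = sigF m * sigF n * (sigF n * sigF m)⁻¹) ∨
        (∃ m : ℕ, r = sigF m * sigF (m+1) * sigF m *
            (sigF (m+1) * sigF m * sigF (m+1))⁻¹) ∨
        (∃ (m q : ℕ) (e : ℤ), (e = 1 ∨ e = -1) ∧ m < q ∧
            r = (sigF q) ^ e * lamF m * (lamF m * (sigF (q+1)) ^ e)⁻¹) ∨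
        (∃ (m : ℕ) (e : ℤ), (e = 1 ∨ e = -1) ∧
            r = (sigF m) ^ e * lamF m *
              (lamF (m+1) * (sigF m) ^ e * (sigF (m+1)) ^ e)⁻¹) ∨
        (∃ (m : ℕ) (e : ℤ), (e = 1 ∨ e = -1) ∧
            r = (sigF m) ^ e * lamF (m+1) *
              (lamF m * (sigF (m+1)) ^ e * (sigF m) ^ e)⁻¹) ∨
        (∃ (m q : ℕ) (e : ℤ), (e = 1 ∨ e = -1) ∧ q + 1 < m ∧
            r = (sigF q) ^ e * lamF m * (lamF m * (sigF q) ^ e)⁻¹) }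

/-- The group `BV̂`, given by its infinite presentation. -/
abbrev BVhat := PresentedGroup bvhatRels

/-- The generator `λ_i` of `BV̂`. -/
def lamB (i : ℕ) : BVhat := PresentedGroup.of (Sum.inl i)
/-- The generator `σ_i` of `BV̂`. -/
def sigB (i : ℕ) : BVhat := PresentedGroup.of (Sum.inr i)

/-- The element `v_n = λ_0^{n+1} λ_1 λ_0^{-n-2}` of `BV̂`. -/
def vB (n : ℕ) : BVhat := lamB 0 ^ (n+1) * lamB 1 * lamB 0 ^ (-((n : ℤ) + 2))
/-- The element `π_n = λ_0^{n+2} σ_1 λ_0^{-n-2}` of `BV̂`. -/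
def piB (n : ℕ) : BVhat := lamB 0 ^ (n+2) * sigB 1 * lamB 0 ^ (-((n : ℤ) + 2))
/-- The element `π̄_n = λ_0^{n+1} σ_0 λ_0^{-n-1}` of `BV̂`. -/
def opiB (n : ℕ) : BVhat := lamB 0 ^ (n+1) * sigB 0 * lamB 0 ^ (-((n : ℤ) + 1))

/-- An element `L` of `BV̂` has height no more than `k` if it can be written as
`λ_{i_1} λ_{i_2} ⋯ λ_{i_k} * λ_0^{-k}`. -/
def HeightLE (k : ℕ) (L : BVhat) : Prop :=
  ∃ l : List ℕ, l.length = k ∧ L = (l.map lamB).prod * lamB 0 ^ (-(k : ℤ))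

lemma rel_eq_one {r : FreeGroup (ℕ ⊕ ℕ)} (h : r ∈ bvhatRels) :
    (QuotientGroup.mk r : BVhat) = 1 :=
  (QuotientGroup.eq_one_iff r).mpr (Subgroup.subset_normalClosure h)

lemma lam_comm {m q : ℕ} (h : m < q) : lamB q * lamB m = lamB m * lamB (q+1) := by
  have hr : lamF q * lamF m * (lamF m * lamF (q+1))⁻¹ ∈ bvhatRels :=
    Or.inl ⟨m, q, h, rfl⟩
  have h1 := rel_eq_one hr
  have hmk : ∀ i, lamB i = (QuotientGroup.mk (lamF i) : BVhat) := fun i => rfl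
  rw [show ((QuotientGroup.mk (lamF q * lamF m * (lamF m * lamF (q+1))⁻¹) : BVhat))
      = lamB q * lamB m * (lamB m * lamB (q+1))⁻¹ by
    simp only [hmk, QuotientGroup.mk_mul, QuotientGroup.mk_inv]; rfl] at h1
  group at h1 ⊢
  exact mul_inv_eq_one.mp h1

/-- λ_0⁻ʲ * λ_q = λ_{q+j} * λ_0⁻ʲ for q ≥ 1. -/
lemma lam_zero_inv_pow_mul {q : ℕ} (hq : 1 ≤ q) (j : ℕ) :
    (lamB 0)⁻¹ ^ j * lamB q = lamB (q + j) * (lamB 0)⁻¹ ^ j := by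
  induction j generalizing q with
  | zero => simp
  | succ n ih =>
    have key : (lamB 0)⁻¹ * lamB q = lamB (q+1) * (lamB 0)⁻¹ := by
      have h := lam_comm (show 0 < q from hq)
      rw [inv_mul_eq_iff_eq_mul, ← mul_assoc, ← h]; group
    calc (lamB 0)⁻¹ ^ (n+1) * lamB q
        = (lamB 0)⁻¹ ^ n * ((lamB 0)⁻¹ * lamB q) := by
          rw [pow_succ]; group
      _ = (lamB 0)⁻¹ ^ n * lamB (q+1) * (lamB 0)⁻¹ := by rw [key]; group
      _ = lamB (q+1+n) * (lamB 0)⁻¹ ^ n * (lamB 0)⁻¹ := by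
          rw [ih (by omega)]
      _ = lamB (q + (n+1)) * (lamB 0)⁻¹ ^ (n+1) := by
          rw [pow_succ, show q+1+n = q+(n+1) by omega, mul_assoc]

theorem height_of_mul_v (k m : ℕ) (L : BVhat) (hL : HeightLE k L) :
    (m + 1 ≤ k → HeightLE (k + 1) (L * vB m)) ∧
    (k ≤ m + 1 → HeightLE (m + 2) (L * vB m)) := by
  obtain ⟨l, hlen, hLeq⟩ := hL
  constructor
  · intro hmk
    refine ⟨l ++ [k - m], by simp [hlen], ?_⟩
    have hj : (lamB 0) ^ (-(k:ℤ)) * (lamB 0) ^ (m+1) = (lamB 0)⁻¹ ^ (k - m - 1) := by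
      rw [← zpow_natCast (lamB 0) (m+1), ← zpow_add, inv_pow,
        ← zpow_natCast (lamB 0) (k-m-1), ← zpow_neg]
      congr 1; omega
    have hc := lam_zero_inv_pow_mul (q := 1) le_rfl (k - m - 1)
    rw [show (1 : ℕ) + (k - m - 1) = k - m by omega] at hc
    calc L * vB m = (l.map lamB).prod *
          ((lamB 0 ^ (-(k:ℤ)) * lamB 0 ^ (m+1)) * lamB 1) * lamB 0 ^ (-((m : ℤ) + 2)) := by
          rw [hLeq, vB]; group
      _ = (l.map lamB).prod * (lamB (k-m) * (lamB 0)⁻¹ ^ (k - m - 1)) * lamB 0 ^ (-((m : ℤ) + 2)) := by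
          rw [hj, hc]
      _ = ((l ++ [k-m]).map lamB).prod * lamB 0 ^ (-((k+1:ℕ):ℤ)) := by
          rw [List.map_append, List.prod_append]
          simp only [List.map_cons, List.map_nil, List.prod_cons, List.prod_nil, mul_one]
          have he : (-((k - m - 1:ℕ):ℤ)) + (-((m:ℤ)+2)) = -((k+1:ℕ):ℤ) := by omega
          rw [inv_pow, ← zpow_natCast (lamB 0) (k-m-1), ← zpow_neg, mul_assoc, mul_assoc,
            ← zpow_add, he]
          exact (mul_assoc _ _ _).symm
  · intro hkm
    refine ⟨l ++ List.replicate (m + 1 - k) 0 ++ [1], by simp [hlen]; omega, ?_⟩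
    have hj : (lamB 0) ^ (-(k:ℤ)) * (lamB 0) ^ (m+1) = (lamB 0) ^ (m + 1 - k) := by
      rw [← zpow_natCast (lamB 0) (m+1), ← zpow_add, ← zpow_natCast (lamB 0) (m+1-k)]
      congr 1; omega
    show L * vB m = ((l ++ List.replicate (m + 1 - k) 0 ++ [1]).map lamB).prod * lamB 0 ^ (-((m+2:ℕ):ℤ))
    calc L * vB m = (l.map lamB).prod *
          ((lamB 0 ^ (-(k:ℤ)) * lamB 0 ^ (m+1)) * lamB 1) * lamB 0 ^ (-((m : ℤ) + 2)) := by
          rw [hLeq, vB]; group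
      _ = ((l ++ List.replicate (m + 1 - k) 0 ++ [1]).map lamB).prod * lamB 0 ^ (-((m+2:ℕ):ℤ)) := by
          rw [hj]
          simp only [List.map_append, List.prod_append, List.map_replicate,
            List.prod_replicate, List.map_cons, List.map_nil, List.prod_cons,
            List.prod_nil, mul_one]
          rw [show (-((m+2:ℕ):ℤ)) = -((m:ℤ)+2) by push_cast; ring]
          group
    rfl

end BrinStmt13
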